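/- Let N ≥ 2 and Q = { q ∈ [0,1]^{N+1} : q_{j-1} ≥ ((j-1)/j) q_j, j = 1,...,N }. Define q^0 = 1 (all-ones), q^k_j = min(j,k)/k for 1 ≤ k ≤ N, and q^{N+1} = 0. Let Q' be the set of q ∈ Q for which there exists k ∈ {0,...,N−1} with q_k > (k/(k+1)) q_{k+1} and q_{k+1} < 1. Then the union of line segments ⋃_{k=0}^{N} [q^k, q^{k+1}] equals Q \ Q'. -/

import Mathlib

/-- Top-k buying probability vectors in [0,1]^{N+1}: q^0 = all-ones,
q^k_j = min(j,k)/k for 1 ≤ k ≤ N, and q^{N+1} = 0. -/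
noncomputable def qv (N k : ℕ) : Fin (N + 1) → ℝ := fun j =>
  if k = 0 then 1 else if k = N + 1 then 0 else ((min (j : ℕ) k : ℕ) : ℝ) / (k : ℝ)

/-- The polytope Q of buying probability vectors. -/
def Qset (N : ℕ) : Set (Fin (N + 1) → ℝ) :=
  {q | (∀ j, 0 ≤ q j ∧ q j ≤ 1) ∧
    ∀ i : ℕ, ∀ hi : i < N,
      q ⟨i, by omega⟩ ≥ ((i : ℝ) / ((i : ℝ) + 1)) * q ⟨i + 1, by omega⟩}

/-- The set Q' of vectors in Q with a slack constraint at some k with q_{k+1} < 1. -/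
def Qprime (N : ℕ) : Set (Fin (N + 1) → ℝ) :=
  {q | q ∈ Qset N ∧
    ∃ k : ℕ, ∃ hk : k < N,
      q ⟨k, by omega⟩ > ((k : ℝ) / ((k : ℝ) + 1)) * q ⟨k + 1, by omega⟩ ∧
      q ⟨k + 1, by omega⟩ < 1}

lemma qv_zero (N : ℕ) (j : Fin (N+1)) : qv N 0 j = 1 := by simp [qv]

lemma qv_top (N : ℕ) (j : Fin (N+1)) : qv N (N+1) j = 0 := by simp [qv]

lemma qv_mid (N k : ℕ) (h1 : 1 ≤ k) (h2 : k ≤ N) (j : Fin (N+1)) :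
    qv N k j = if (j:ℕ) ≤ k then (j:ℝ)/k else 1 := by
  have hk0 : (k:ℝ) ≠ 0 := Nat.cast_ne_zero.mpr (by omega)
  unfold qv
  rw [if_neg (by omega), if_neg (by omega)]
  by_cases h : (j:ℕ) ≤ k
  · rw [if_pos h, min_eq_left h]
  · rw [if_neg h, min_eq_right (by omega), div_self hk0]

lemma mid_mem (N m : ℕ) (hm1 : 1 ≤ m) (hmN : m ≤ N) (c : ℝ) (hc0 : 0 ≤ c)
    (hcm : (m:ℝ) * c ≤ 1) (hlow : m < N → 1 ≤ ((m:ℝ) + 1) * c)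
    (q : Fin (N+1) → ℝ) (hq : ∀ j : Fin (N+1), q j = if (j:ℕ) ≤ m then (j:ℝ) * c else 1) :
    q ∈ Qset N \ Qprime N := by
  have hQ : q ∈ Qset N := by
    constructor
    · intro j
      rw [hq j]
      by_cases h : (j:ℕ) ≤ m
      · rw [if_pos h]
        have hjm : (j:ℝ) ≤ (m:ℝ) := by exact_mod_cast h
        constructor
        · positivity
        · calc (j:ℝ) * c ≤ (m:ℝ) * c := by
                exact mul_le_mul_of_nonneg_right hjm hc0
            _ ≤ 1 := hcm
      · rw [if_neg h]; norm_num
    · intro i hi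
      have e1 : q ⟨i, by omega⟩ = if i ≤ m then (i:ℝ) * c else 1 := by
        rw [hq ⟨i, by omega⟩]
      have e2 : q ⟨i+1, by omega⟩ = if i+1 ≤ m then ((i:ℝ)+1) * c else 1 := by
        rw [hq ⟨i+1, by omega⟩]; push_cast; rfl
      rw [e1, e2]
      have hi1 : (0:ℝ) < (i:ℝ) + 1 := by positivity
      rcases lt_trichotomy (i+1) (m+1) with h | h | h
      · have him : i ≤ m := by omega
        by_cases h2 : i + 1 ≤ m
        · rw [if_pos him, if_pos h2]
          have : (i:ℝ) / ((i:ℝ)+1) * (((i:ℝ)+1)*c) = (i:ℝ) * c := by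
            field_simp
          rw [this]
        · omega
      · have him : i = m := by omega
        subst him
        rw [if_pos (le_refl i), if_neg (by omega)]
        have hl := hlow (by omega)
        rw [ge_iff_le, div_mul_eq_mul_div, div_le_iff₀ hi1, mul_one]
        nlinarith [Nat.cast_nonneg (α := ℝ) i]
      · rw [if_neg (by omega), if_neg (by omega), mul_one]
        rw [ge_iff_le, div_le_iff₀ hi1]
        nlinarith
  refine ⟨hQ, ?_⟩
  rintro ⟨-, k, hk, hgt, hlt⟩
  have e1 : q ⟨k, by omega⟩ = if k ≤ m then (k:ℝ) * c else 1 := by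
    rw [hq ⟨k, by omega⟩]
  have e2 : q ⟨k+1, by omega⟩ = if k+1 ≤ m then ((k:ℝ)+1) * c else 1 := by
    rw [hq ⟨k+1, by omega⟩]; push_cast; rfl
  by_cases h2 : k + 1 ≤ m
  · rw [e1, e2, if_pos (by omega : k ≤ m), if_pos h2] at hgt
    have : (k:ℝ) / ((k:ℝ)+1) * (((k:ℝ)+1)*c) = (k:ℝ) * c := by
      have : ((k:ℝ)+1) ≠ 0 := by positivity
      field_simp
    rw [this] at hgt
    exact lt_irrefl _ hgt
  · rw [e2, if_neg h2] at hlt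
    exact lt_irrefl _ hlt

lemma k0_mem (N : ℕ) (q : Fin (N+1) → ℝ) (h0 : 0 ≤ q 0) (h1 : q 0 ≤ 1)
    (hq : ∀ j : Fin (N+1), 1 ≤ (j:ℕ) → q j = 1) : q ∈ Qset N \ Qprime N := by
  have hQ : q ∈ Qset N := by
    constructor
    · intro j
      by_cases h : 1 ≤ (j:ℕ)
      · rw [hq j h]; norm_num
      · have : j = 0 := by
          apply Fin.ext; simp only [Fin.val_zero]; omega
        rw [this]; exact ⟨h0, h1⟩
    · intro i hi
      have e2 : q ⟨i+1, by omega⟩ = 1 := hq ⟨i+1, by omega⟩ (by simp)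
      rw [e2, mul_one]
      by_cases h : i = 0
      · subst h
        simpa using h0
      · have e1 : q ⟨i, by omega⟩ = 1 := hq ⟨i, by omega⟩ (by simpa using Nat.one_le_iff_ne_zero.mpr h)
        rw [e1, ge_iff_le, div_le_one (by positivity)]
        linarith
  refine ⟨hQ, ?_⟩
  rintro ⟨-, k, hk, hgt, hlt⟩
  have e2 : q ⟨k+1, by omega⟩ = 1 := hq ⟨k+1, by omega⟩ (by simp)
  rw [e2] at hlt
  exact lt_irrefl _ hlt

/-- Structure of a point on the middle segments. -/
lemma seg_form (N : ℕ) (hN : 2 ≤ N) (k : ℕ) (hk1 : 1 ≤ k) (hk2 : k < N)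
    (q : Fin (N+1) → ℝ) (a b : ℝ) (ha : 0 ≤ a) (hb : 0 ≤ b) (hab : a + b = 1)
    (hq : a • qv N k + b • qv N (k+1) = q) :
    ∃ c : ℝ, 0 ≤ c ∧ (k:ℝ) * c ≤ 1 ∧ 1 ≤ ((k:ℝ)+1) * c ∧
      ∀ j : Fin (N+1), q j = if (j:ℕ) ≤ k then (j:ℝ) * c else 1 := by
  have hk0 : (0:ℝ) < (k:ℝ) := by exact_mod_cast hk1
  have hk10 : (0:ℝ) < (k:ℝ) + 1 := by positivity
  have hval : ∀ j, q j = a * qv N k j + b * qv N (k+1) j := by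
    intro j; rw [← hq]; simp
  refine ⟨a / k + b / (k+1), by positivity, ?_, ?_, ?_⟩
  · have : (k:ℝ) * (a / k + b / (k+1)) = a + (k:ℝ)/((k:ℝ)+1) * b := by
      field_simp
    rw [this]
    have hd : (k:ℝ)/((k:ℝ)+1) ≤ 1 := div_le_one_of_le₀ (by linarith) (by linarith)
    nlinarith
  · have : ((k:ℝ)+1) * (a / k + b / (k+1)) = ((k:ℝ)+1)/(k:ℝ) * a + b := by
      field_simp
    rw [this]
    have h1 : a ≤ ((k:ℝ)+1)/(k:ℝ) * a := by
      nlinarith [(one_le_div hk0).mpr (by linarith : (k:ℝ) ≤ (k:ℝ)+1)]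
    linarith
  · intro j
    rw [hval j, qv_mid N k hk1 (le_of_lt hk2) j, qv_mid N (k+1) (by omega) (by omega) j]
    push_cast
    by_cases h1 : (j:ℕ) ≤ k
    · rw [if_pos h1, if_pos h1, if_pos (by omega : (j:ℕ) ≤ k + 1)]
      field_simp
    · rw [if_neg h1, if_neg h1]
      by_cases h2 : (j:ℕ) ≤ k + 1
      · rw [if_pos h2]
        have : (j:ℕ) = k + 1 := by omega
        rw [this]
        push_cast
        rw [div_self (by positivity)]
        linarith
      · rw [if_neg h2]; linarith

open Classical in
/-- Structure extracted from membership in Q \ Q' (non-constant case). -/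
lemma rev_form (N : ℕ) (hN : 2 ≤ N) (q : Fin (N+1) → ℝ)
    (hQ : q ∈ Qset N) (hnP : q ∉ Qprime N)
    (hnall : ¬ ∀ j : Fin (N+1), 1 ≤ (j:ℕ) → q j = 1) :
    ∃ m : ℕ, ∃ hmN : m ≤ N, 1 ≤ m ∧ q ⟨m, by omega⟩ < 1 ∧
      (∀ j : ℕ, ∀ hj : j ≤ N, m < j → q ⟨j, by omega⟩ = 1) ∧
      (∀ j : ℕ, ∀ hj : j ≤ m, q ⟨j, by omega⟩ = (j:ℝ)/(m:ℝ) * q ⟨m, by omega⟩) := by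
  obtain ⟨hbnd, hmono⟩ := hQ
  have hslack : ∀ k : ℕ, ∀ hk : k < N, q ⟨k+1, by omega⟩ < 1 →
      q ⟨k, by omega⟩ = ((k:ℝ)/((k:ℝ)+1)) * q ⟨k+1, by omega⟩ := by
    intro k hk hlt
    by_contra hne
    exact hnP ⟨⟨hbnd, hmono⟩, k, hk, lt_of_le_of_ne (hmono k hk) (Ne.symm hne), hlt⟩
  push_neg at hnall
  obtain ⟨j0, hj01, hj0ne⟩ := hnall
  have hj0lt : q j0 < 1 := lt_of_le_of_ne (hbnd j0).2 hj0ne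
  set P : ℕ → Prop := fun j => ∃ h : j < N + 1, 1 ≤ j ∧ q ⟨j, h⟩ < 1 with hP
  have hPj0 : P (j0 : ℕ) := ⟨j0.isLt, hj01, by rw [show (⟨(j0:ℕ), j0.isLt⟩ : Fin (N+1)) = j0 from Fin.ext rfl]; exact hj0lt⟩
  set m := Nat.findGreatest P N with hm
  have hPm : P m := Nat.findGreatest_spec (Nat.le_of_lt_succ j0.isLt) hPj0
  obtain ⟨hmlt, hm1, hqm⟩ := hPm
  have hmN : m ≤ N := by omega
  have hmax : ∀ j : ℕ, ∀ hj : j ≤ N, m < j → q ⟨j, by omega⟩ = 1 := by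
    intro j hj hmj
    have hnPj : ¬ P j := Nat.findGreatest_is_greatest (hm ▸ hmj) hj
    have h2 : ¬ q ⟨j, by omega⟩ < 1 := fun hlt => hnPj ⟨by omega, by omega, hlt⟩
    exact le_antisymm (hbnd _).2 (not_lt.mp h2)
  have hmR : (0:ℝ) < (m:ℝ) := by exact_mod_cast hm1
  have htel : ∀ d : ℕ, d ≤ m → q ⟨m - d, by omega⟩ = ((m-d:ℕ):ℝ)/(m:ℝ) * q ⟨m, by omega⟩ := by
    intro d
    induction d with
    | zero => intro _; simp [div_self (ne_of_gt hmR)]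
    | succ d ih =>
      intro hd
      have hd' : d ≤ m := by omega
      have ihv := ih hd'
      have hfrac : ((m-d:ℕ):ℝ)/(m:ℝ) ≤ 1 := by
        apply div_le_one_of_le₀ ?_ (le_of_lt hmR)
        exact_mod_cast Nat.sub_le m d
      have hlt : q ⟨m - d, by omega⟩ < 1 := by
        rw [ihv]
        calc ((m-d:ℕ):ℝ)/(m:ℝ) * q ⟨m, by omega⟩ ≤ 1 * q ⟨m, by omega⟩ := by
              apply mul_le_mul_of_nonneg_right hfrac (hbnd _).1
          _ < 1 := by rw [one_mul]; exact hqm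
      have hkey := hslack (m - (d+1)) (by omega)
      have hidx : m - (d+1) + 1 = m - d := by omega
      rw [show (⟨m - (d+1) + 1, by omega⟩ : Fin (N+1)) = ⟨m - d, by omega⟩ from Fin.ext (by simp [hidx])] at hkey
      have := hkey hlt
      rw [this, ihv]
      have h1 : ((m - (d+1):ℕ):ℝ) + 1 = ((m - d:ℕ):ℝ) := by
        exact_mod_cast congrArg (Nat.cast (R := ℝ)) hidx
      rw [← h1]
      have hA : (0:ℝ) ≤ ((m - (d+1):ℕ):ℝ) := Nat.cast_nonneg _
      have hA1 : ((m - (d+1):ℕ):ℝ) + 1 ≠ 0 := by positivity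
      set A := ((m - (d+1):ℕ):ℝ)
      rw [show A/(A+1) * ((A+1)/(m:ℝ) * q ⟨m, by omega⟩)
            = (A * ((A+1)/(A+1))) / (m:ℝ) * q ⟨m, by omega⟩ from by ring,
        div_self hA1, mul_one]
  refine ⟨m, hmN, hm1, hqm, hmax, ?_⟩
  intro j hj
  have hthis := htel (m - j) (by omega)
  have hjj : m - (m - j) = j := by omega
  simp only [hjj] at hthis
  exact hthis

/-- ⋃_{k=0}^{N} [q^k, q^{k+1}] = Q \ Q'. -/
theorem stmt11 (N : ℕ) (hN : 2 ≤ N) :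
    (⋃ k ∈ Finset.range (N + 1), segment ℝ (qv N k) (qv N (k + 1))) = Qset N \ Qprime N := by
  ext q
  simp only [Set.mem_iUnion, Finset.mem_range]
  constructor
  · rintro ⟨k, hk, a, b, ha, hb, hab, hq⟩
    have hkN : k ≤ N := by omega
    have hval : ∀ j, q j = a * qv N k j + b * qv N (k+1) j := by
      intro j; rw [← hq]; simp
    rcases Nat.eq_zero_or_pos k with hk0 | hk1
    · -- k = 0
      subst hk0
      have hv1 : ∀ j : Fin (N+1), qv N 1 j = if (j:ℕ) ≤ 1 then (j:ℝ)/((1:ℕ):ℝ) else 1 :=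
        qv_mid N 1 le_rfl (by omega)
      apply k0_mem
      · rw [hval 0, qv_zero, hv1 0]
        simp
        linarith
      · rw [hval 0, qv_zero, hv1 0]
        simp
        linarith
      · intro j hj
        rw [hval j, qv_zero, hv1 j]
        by_cases h : (j:ℕ) ≤ 1
        · have : (j:ℕ) = 1 := by omega
          rw [if_pos h, this]
          norm_num
          linarith
        · rw [if_neg h]
          linarith
    · rcases eq_or_lt_of_le hkN with hkeq | hklt
      · -- k = N
        subst hkeq
        have hc : ∀ j : Fin (k+1), q j = (j:ℝ) * (a / k) := by
          intro j
          rw [hval j, qv_top, qv_mid k k hk1 le_rfl j,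
            if_pos (by omega : (j:ℕ) ≤ k)]
          ring
        have hkR : (0:ℝ) < (k:ℝ) := by exact_mod_cast hk1
        refine mid_mem k k hk1 le_rfl (a / k) (by positivity) ?_ (by omega) q ?_
        · rw [mul_div_cancel₀ _ (ne_of_gt hkR)]
          linarith
        · intro j
          rw [if_pos (by omega : (j:ℕ) ≤ k)]
          exact hc j
      · -- 1 ≤ k < N
        obtain ⟨c, hc0, hcu, hcl, hform⟩ := seg_form N hN k hk1 hklt q a b ha hb hab hq
        exact mid_mem N k hk1 (le_of_lt hklt) c hc0 hcu (fun _ => hcl) q hform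
  · rintro ⟨hQ, hnP⟩
    by_cases hall : ∀ j : Fin (N+1), 1 ≤ (j:ℕ) → q j = 1
    · -- segment k = 0
      refine ⟨0, by omega, q 0, 1 - q 0, (hQ.1 0).1, by linarith [(hQ.1 0).2], by ring, ?_⟩
      funext j
      have hv1 : qv N 1 j = if (j:ℕ) ≤ 1 then (j:ℝ)/((1:ℕ):ℝ) else 1 := qv_mid N 1 le_rfl (by omega) j
      simp only [Pi.add_apply, Pi.smul_apply, smul_eq_mul, qv_zero, hv1]
      by_cases h0 : (j:ℕ) = 0
      · have hj0 : j = 0 := Fin.ext h0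
        subst hj0
        norm_num
      · have h1 : 1 ≤ (j:ℕ) := by omega
        rw [hall j h1]
        by_cases h : (j:ℕ) ≤ 1
        · have : (j:ℕ) = 1 := by omega
          rw [if_pos h, this]
          norm_num
        · rw [if_neg h]
          ring
    · obtain ⟨m, hmN, hm1, hqm, hmax, hlin⟩ := rev_form N hN q hQ hnP hall
      have hmR : (0:ℝ) < (m:ℝ) := by exact_mod_cast hm1
      have hqm0 : 0 ≤ q ⟨m, by omega⟩ := (hQ.1 _).1
      rcases eq_or_lt_of_le hmN with hmeq | hmlt
      · -- m = N : segment k = N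
        subst hmeq
        refine ⟨m, by omega, q ⟨m, by omega⟩, 1 - q ⟨m, by omega⟩, hqm0, by linarith, by ring, ?_⟩
        funext j
        have hvm : qv m m j = if (j:ℕ) ≤ m then (j:ℝ)/m else 1 := qv_mid m m hm1 le_rfl j
        simp only [Pi.add_apply, Pi.smul_apply, smul_eq_mul, qv_top, hvm,
          if_pos (by omega : (j:ℕ) ≤ m)]
        have := hlin (j:ℕ) (by omega)
        rw [show (⟨(j:ℕ), by omega⟩ : Fin (m+1)) = j from Fin.ext rfl] at this
        rw [this]
        ring
      · -- m < N : segment k = m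
        have hq1 : q ⟨m+1, by omega⟩ = 1 := hmax (m+1) (by omega) (by omega)
        have hge : q ⟨m, by omega⟩ ≥ ((m:ℝ)/((m:ℝ)+1)) * q ⟨m+1, by omega⟩ := hQ.2 m hmlt
        rw [hq1, mul_one] at hge
        have hm10 : (0:ℝ) < (m:ℝ) + 1 := by positivity
        have hge' : (m:ℝ) ≤ ((m:ℝ)+1) * q ⟨m, by omega⟩ := by
          rw [ge_iff_le, div_le_iff₀ hm10] at hge
          linarith [hge]
        set Qm := q ⟨m, by omega⟩ with hQm
        refine ⟨m, by omega, ((m:ℝ)+1) * Qm - m, 1 - (((m:ℝ)+1) * Qm - m), by linarith,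
          by nlinarith, by ring, ?_⟩
        funext j
        have hvm : qv N m j = if (j:ℕ) ≤ m then (j:ℝ)/m else 1 := qv_mid N m hm1 (by omega) j
        have hvm1 : qv N (m+1) j = if (j:ℕ) ≤ m+1 then (j:ℝ)/((m+1:ℕ):ℝ) else 1 :=
          qv_mid N (m+1) (by omega) (by omega) j
        simp only [Pi.add_apply, Pi.smul_apply, smul_eq_mul, hvm, hvm1]
        push_cast
        by_cases h : (j:ℕ) ≤ m
        · rw [if_pos h, if_pos (by omega : (j:ℕ) ≤ m+1)]
          have := hlin (j:ℕ) h
          rw [show (⟨(j:ℕ), by omega⟩ : Fin (N+1)) = j from Fin.ext rfl] at this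
          rw [this, ← hQm]
          field_simp
          ring
        · rw [if_neg h]
          have hj1 : q j = 1 := by
            have := hmax (j:ℕ) (by omega) (by omega)
            rw [show (⟨(j:ℕ), by omega⟩ : Fin (N+1)) = j from Fin.ext rfl] at this
            exact this
          rw [hj1]
          by_cases h2 : (j:ℕ) ≤ m+1
          · have : (j:ℕ) = m+1 := by omega
            rw [if_pos h2, this]
            push_cast
            rw [div_self (by positivity)]
            ring
          · rw [if_neg h2]
            ring
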